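/- In a 3-way (v,k,2) Steiner trade, if every element x of the foundation satisfies r_x ≥ 3, then the volume is at least 2k + 1. -/
import Mathlib


/-- The blocks of a collection `Ti` that contain a given subset `S`. -/
def blocksContaining (Ti : Finset (Finset ℕ)) (S : Finset ℕ) : Finset (Finset ℕ) :=
  Ti.filter (fun B => S ⊆ B)

/-- `T` is a μ-way (v,k,t) trade of volume `m` with point set `V`:
μ pairwise disjoint collections, each of `m` k-subsets of the v-set `V`,
such that every t-subset of `V` is contained in the same number of blocks
of each collection. -/
structure IsTrade (μ v k t m : ℕ) (V : Finset ℕ) (T : Fin μ → Finset (Finset ℕ)) : Prop where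
  cardV : V.card = v
  volume : ∀ i, (T i).card = m
  blockSub : ∀ i, ∀ B ∈ T i, B ⊆ V
  blockCard : ∀ i, ∀ B ∈ T i, B.card = k
  disj : ∀ i j, i ≠ j → Disjoint (T i) (T j)
  balanced : ∀ S : Finset ℕ, S.card = t → ∀ i j,
    (blocksContaining (T i) S).card = (blocksContaining (T j) S).card

/-- A μ-way (v,k,t) Steiner trade: a trade in which every t-subset occurs
at most once in each collection. -/
def IsSteinerTrade (μ v k t m : ℕ) (V : Finset ℕ) (T : Fin μ → Finset (Finset ℕ)) : Prop :=
  IsTrade μ v k t m V T ∧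
  ∀ S : Finset ℕ, S.card = t → ∀ i, (blocksContaining (T i) S).card ≤ 1

/-- The foundation of a μ-way trade: the union of all its blocks. -/
def foundation {μ : ℕ} (T : Fin μ → Finset (Finset ℕ)) : Finset ℕ :=
  Finset.univ.biUnion (fun i => (T i).biUnion id)

/-- `T` is t-solely balanced: no two distinct collections contain a common
(t+1)-subset. -/
def SolelyBalanced {μ : ℕ} (t : ℕ) (T : Fin μ → Finset (Finset ℕ)) : Prop :=
  ∀ i j : Fin μ, i ≠ j → ∀ S : Finset ℕ, S.card = t + 1 →
    ¬ ((∃ B ∈ T i, S ⊆ B) ∧ (∃ B ∈ T j, S ⊆ B))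

/-- In a nonvoid 3-way (v,k,2) Steiner trade, if every element x of the
foundation lies in at least 3 blocks, then the volume is at least 2k + 1. -/
theorem rx_ge_three_volume_bound (v k m : ℕ) (hm : 0 < m) (V : Finset ℕ)
    (T : Fin 3 → Finset (Finset ℕ)) (hT : IsSteinerTrade 3 v k 2 m V T)
    (hr : ∀ x ∈ foundation T, 3 ≤ (blocksContaining (T 0) {x}).card) :
    2 * k + 1 ≤ m := by

  obtain ⟨hTr, hSt⟩ := hT
  obtain ⟨B, hB⟩ := Finset.card_pos.mp (by rw [hTr.volume 0]; exact hm)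
  have hkB : B.card = k := hTr.blockCard 0 B hB
  set F : ℕ → Finset (Finset ℕ) := fun a => (blocksContaining (T 0) {a}).erase B with hF
  have hFsub : ∀ a ∈ B, F a ⊆ (T 0).erase B := by
    intro a _ C hC
    simp only [hF, blocksContaining, Finset.mem_erase, Finset.mem_filter] at hC ⊢
    exact ⟨hC.1, hC.2.1⟩
  have hFcard : ∀ a ∈ B, 2 ≤ (F a).card := by
    intro a ha
    have hfound : a ∈ foundation T := by
      simp only [foundation, Finset.mem_biUnion]
      exact ⟨0, Finset.mem_univ _, B, hB, ha⟩
    have h3 := hr a hfound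
    have hBmem : B ∈ blocksContaining (T 0) {a} := by
      simp [blocksContaining, Finset.singleton_subset_iff, hB, ha]
    have h2 : (F a).card = (blocksContaining (T 0) {a}).card - 1 :=
      Finset.card_erase_of_mem hBmem
    omega
  have hdisj : ∀ a ∈ B, ∀ b ∈ B, a ≠ b → Disjoint (F a) (F b) := by
    intro a _ b _ hab
    rw [Finset.disjoint_left]
    intro C hCa hCb
    simp only [hF, blocksContaining, Finset.mem_erase, Finset.mem_filter,
      Finset.singleton_subset_iff] at hCa hCb
    have hpair : ({a, b} : Finset ℕ).card = 2 := by
      rw [Finset.card_insert_of_notMem (by simpa using hab), Finset.card_singleton]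
    have h1 := hSt {a, b} hpair 0
    have hBm : B ∈ blocksContaining (T 0) {a, b} := by
      simp only [blocksContaining, Finset.mem_filter, Finset.insert_subset_iff,
        Finset.singleton_subset_iff]
      refine ⟨hB, ?_, ?_⟩ <;> assumption
    have hCm : C ∈ blocksContaining (T 0) {a, b} := by
      simp only [blocksContaining, Finset.mem_filter, Finset.insert_subset_iff,
        Finset.singleton_subset_iff]
      exact ⟨hCa.2.1, hCa.2.2, hCb.2.2⟩
    have : 2 ≤ (blocksContaining (T 0) {a, b}).card := by
      have : ({B, C} : Finset (Finset ℕ)) ⊆ blocksContaining (T 0) {a, b} := by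
        intro X hX
        simp only [Finset.mem_insert, Finset.mem_singleton] at hX
        rcases hX with rfl | rfl <;> assumption
      calc 2 = ({B, C} : Finset (Finset ℕ)).card := by
              rw [Finset.card_insert_of_notMem (by simpa using (hCa.1).symm),
                Finset.card_singleton]
        _ ≤ _ := Finset.card_le_card this
    omega
  have hbig : (B.biUnion F).card ≤ ((T 0).erase B).card := by
    apply Finset.card_le_card
    intro C hC
    simp only [Finset.mem_biUnion] at hC
    obtain ⟨a, ha, hCa⟩ := hC
    exact hFsub a ha hCa
  rw [Finset.card_biUnion hdisj] at hbig
  have hsum : 2 * k ≤ ∑ a ∈ B, (F a).card := by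
    calc 2 * k = ∑ _a ∈ B, 2 := by rw [Finset.sum_const, hkB]; ring
      _ ≤ _ := Finset.sum_le_sum hFcard
  have := Finset.card_erase_of_mem hB
  rw [hTr.volume 0] at this
  omega
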